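/- Let A : ℝ → Matrix (Fin m) (Fin m) ℝ be a family of symmetric matrices with entries differentiable at θ₀, and suppose the operator norm of A(θ₀) is strictly less than 1. For n̄ ∈ ℕ^m define P(θ, n̄) = (det(I − A(θ)²))^{1/2} · Haf(A(θ)_{n̄})² / (n_1!⋯n_m!). Then θ ↦ P(θ, n̄) is differentiable at θ₀ with derivative −Tr[A (I − A²)^{-1} A'] · P(θ₀, n̄) + 2 · (det(I − A²))^{1/2}/(n_1!⋯n_m!) · Haf(A_{n̄}) · (d/dθ Haf(A(θ)_{n̄}))|_{θ₀}, all matrices evaluated at θ₀, with A' the entrywise derivative. -/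

import Mathlib

open Finset Matrix
open scoped Matrix.Norms.L2Operator

open scoped Classical in
/-- The hafnian of a matrix: the sum over all perfect matchings of the index set
(encoded as fixed-point-free involutions `σ`), of the product of the entries
`A i (σ i)` over the pairs `{i, σ i}` (each pair taken once, via `i < σ i`).
For an empty index type this is `1`, and for an odd-cardinality index type it is `0`. -/
noncomputable def hafnian {ι : Type*} [Fintype ι] [LinearOrder ι] {R : Type*} [CommRing R]
    (A : Matrix ι ι R) : R :=
  ∑ σ ∈ Finset.univ.filter
      (fun σ : Equiv.Perm ι => σ * σ = 1 ∧ ∀ i, σ i ≠ i),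
    ∏ i ∈ Finset.univ.filter (fun i => i < σ i), A i (σ i)

/-- The index type for `A_n̄` (row/column `i` repeated `n i` times), ordered
lexicographically. -/
instance repIdxFintype {M : ℕ} (n : Fin M → ℕ) : Fintype (Σₗ i : Fin M, Fin (n i)) :=
  inferInstanceAs (Fintype ((i : Fin M) × Fin (n i)))

/-- `A_n̄`: the matrix obtained from the `M × M` matrix `A` by repeating row and column `i`
exactly `n i` times (deleting them when `n i = 0`).  Note that `hafnian (repMat A n) = 0`
automatically when `Σ n_i` is odd. -/
def repMat {M : ℕ} {R : Type*} (A : Matrix (Fin M) (Fin M) R) (n : Fin M → ℕ) :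
    Matrix (Σₗ i : Fin M, Fin (n i)) (Σₗ i : Fin M, Fin (n i)) R :=
  A.submatrix (fun p => (ofLex p).1) (fun p => (ofLex p).1)

/-- Jacobi's formula: derivative of the determinant. -/
private lemma hasDerivAt_det_aux {M : ℕ} {B : ℝ → Matrix (Fin M) (Fin M) ℝ}
    {B' : Matrix (Fin M) (Fin M) ℝ} {θ₀ : ℝ}
    (h : ∀ i j, HasDerivAt (fun θ => B θ i j) (B' i j) θ₀) :
    HasDerivAt (fun θ => (B θ).det) ((Matrix.adjugate (B θ₀) * B').trace) θ₀ := by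
  have key : HasDerivAt (fun θ => (B θ).det)
      (∑ σ : Equiv.Perm (Fin M), ((Equiv.Perm.sign σ : ℤ) : ℝ) *
        ∑ i, (∏ j ∈ Finset.univ.erase i, B θ₀ (σ j) j) * B' (σ i) i) θ₀ := by
    simp only [Matrix.det_apply']
    refine HasDerivAt.fun_sum fun σ _ => ?_
    have hp : HasDerivAt (fun θ => ∏ i, B θ (σ i) i)
        (∑ i, (∏ j ∈ Finset.univ.erase i, B θ₀ (σ j) j) * B' (σ i) i) θ₀ := by
      simpa [smul_eq_mul] using
        HasDerivAt.fun_finsetProd (u := Finset.univ) (f := fun i θ => B θ (σ i) i)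
          (f' := fun i => B' (σ i) i) (fun i _ => h (σ i) i)
    exact hp.const_mul _
  convert key using 1
  have expand : ∀ i, (Matrix.adjugate (B θ₀) * B') i i
      = ((B θ₀).updateCol i fun k => B' k i).det := by
    intro i
    rw [← Matrix.cramer_apply, Matrix.cramer_eq_adjugate_mulVec]
    simp [Matrix.mul_apply, Matrix.mulVec, dotProduct]
  have hdetcol : ∀ i, ((B θ₀).updateCol i fun k => B' k i).det
      = ∑ σ : Equiv.Perm (Fin M), ((Equiv.Perm.sign σ : ℤ) : ℝ) *
          ((∏ j ∈ Finset.univ.erase i, B θ₀ (σ j) j) * B' (σ i) i) := by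
    intro i
    rw [Matrix.det_apply']
    refine Finset.sum_congr rfl fun σ _ => ?_
    congr 1
    rw [← Finset.mul_prod_erase _ _ (Finset.mem_univ i), mul_comm]
    congr 1
    · exact Finset.prod_congr rfl fun j hj => by
        rw [Matrix.updateCol_apply, if_neg (Finset.ne_of_mem_erase hj)]
    · rw [Matrix.updateCol_apply, if_pos rfl]
  calc (Matrix.adjugate (B θ₀) * B').trace
      = ∑ i, ∑ σ : Equiv.Perm (Fin M), ((Equiv.Perm.sign σ : ℤ) : ℝ) *
          ((∏ j ∈ Finset.univ.erase i, B θ₀ (σ j) j) * B' (σ i) i) := by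
        simp only [Matrix.trace, Matrix.diag]
        exact Finset.sum_congr rfl fun i _ => by rw [expand, hdetcol]
    _ = _ := by
        rw [Finset.sum_comm]
        exact Finset.sum_congr rfl fun σ _ => by rw [Finset.mul_sum]

private lemma posdef_aux {m : ℕ} {A₀ : Matrix (Fin m) (Fin m) ℝ}
    (hsymm : A₀.IsSymm) (hnorm : ‖A₀‖ < 1) : (1 - A₀ ^ 2).PosDef := by
  have dot_eq : ∀ v : EuclideanSpace ℝ (Fin m), (v : Fin m → ℝ) ⬝ᵥ (v : Fin m → ℝ) = ‖v‖ ^ 2 := by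
    intro v
    rw [EuclideanSpace.real_norm_sq_eq]
    simp [dotProduct, sq]
  refine Matrix.PosDef.of_dotProduct_mulVec_pos ?_ ?_
  · show (1 - A₀ ^ 2)ᴴ = _
    have : A₀ᴴ = A₀ := by
      rw [Matrix.conjTranspose_eq_transpose_of_trivial, hsymm.eq]
    rw [conjTranspose_sub, conjTranspose_one, conjTranspose_pow, this]
  · intro x hx
    have hx' : (x : Fin m → ℝ) ⬝ᵥ ((1 - A₀ ^ 2) *ᵥ x) =
        x ⬝ᵥ x - (A₀ *ᵥ x) ⬝ᵥ (A₀ *ᵥ x) := by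
      rw [Matrix.sub_mulVec, Matrix.one_mulVec, dotProduct_sub]
      congr 1
      rw [pow_two, ← Matrix.mulVec_mulVec, Matrix.dotProduct_mulVec]
      congr 1
      rw [← Matrix.mulVec_transpose, hsymm.eq]
    let X : EuclideanSpace ℝ (Fin m) := WithLp.toLp 2 x
    have hX : ‖X‖ ≠ 0 := by
      simpa [X] using hx
    have hXpos : 0 < ‖X‖ := lt_of_le_of_ne (norm_nonneg _) (Ne.symm hX)
    have hAx : ‖(EuclideanSpace.equiv (Fin m) ℝ).symm (A₀ *ᵥ X)‖ < ‖X‖ := by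
      calc ‖(EuclideanSpace.equiv (Fin m) ℝ).symm (A₀ *ᵥ X)‖ ≤ ‖A₀‖ * ‖X‖ :=
            A₀.l2_opNorm_mulVec X
        _ < 1 * ‖X‖ := by
            exact mul_lt_mul_of_pos_right hnorm hXpos
        _ = ‖X‖ := one_mul _
    have := pow_lt_pow_left₀ hAx (norm_nonneg _) (by norm_num : (2:ℕ) ≠ 0)
    simp only [star_trivial]
    rw [hx', show x ⬝ᵥ x = ‖X‖ ^ 2 from dot_eq X]
    have h2 : (A₀ *ᵥ (x : Fin m → ℝ)) ⬝ᵥ (A₀ *ᵥ x)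
        = ‖(EuclideanSpace.equiv (Fin m) ℝ).symm (A₀ *ᵥ X)‖ ^ 2 :=
      dot_eq ((EuclideanSpace.equiv (Fin m) ℝ).symm (A₀ *ᵥ X))
    rw [h2]
    linarith

/-- for a family `A(θ)` of symmetric `m × m` matrices with entrywise derivative
`A'` at `θ₀` and `‖A(θ₀)‖ < 1` (L2 operator norm), the pure-state GBS probability
`P(θ, n̄) = det(I − A(θ)²)^{1/2} · Haf(A(θ)_n̄)² / (n̄!)` is differentiable at `θ₀` with
derivative `−Tr[A(I−A²)⁻¹A']·P(θ₀,n̄) + 2·det(I−A²)^{1/2}/(n̄!)·Haf(A_n̄)·(d/dθ Haf(A(θ)_n̄))|_{θ₀}`. -/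
theorem hasDerivAt_pure_gbs {m : ℕ}
    (A : ℝ → Matrix (Fin m) (Fin m) ℝ) (A' : Matrix (Fin m) (Fin m) ℝ) (θ₀ : ℝ)
    (hsymm : ∀ θ, (A θ).IsSymm)
    (hdiff : ∀ i j, HasDerivAt (fun θ => A θ i j) (A' i j) θ₀)
    (hnorm : ‖A θ₀‖ < 1) (n : Fin m → ℕ) :
    HasDerivAt
      (fun θ => Real.sqrt (1 - A θ ^ 2).det * hafnian (repMat (A θ) n) ^ 2 /
        ∏ i, (Nat.factorial (n i) : ℝ))
      (-Matrix.trace (A θ₀ * (1 - A θ₀ ^ 2)⁻¹ * A') *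
          (Real.sqrt (1 - A θ₀ ^ 2).det * hafnian (repMat (A θ₀) n) ^ 2 /
            ∏ i, (Nat.factorial (n i) : ℝ)) +
        2 * (Real.sqrt (1 - A θ₀ ^ 2).det / ∏ i, (Nat.factorial (n i) : ℝ)) *
          hafnian (repMat (A θ₀) n) *
          deriv (fun θ => hafnian (repMat (A θ) n)) θ₀) θ₀ := by
  classical
  -- entrywise derivative of B θ = 1 - A θ ^ 2
  have hB : ∀ i j, HasDerivAt (fun θ => (1 - A θ ^ 2 : Matrix (Fin m) (Fin m) ℝ) i j)
      ((-(A' * A θ₀ + A θ₀ * A')) i j) θ₀ := by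
    intro i j
    have h1 : (fun θ => (1 - A θ ^ 2 : Matrix (Fin m) (Fin m) ℝ) i j)
        = fun θ => (1 : Matrix (Fin m) (Fin m) ℝ) i j - ∑ k, A θ i k * A θ k j := by
      funext θ
      simp [Matrix.sub_apply, pow_two, Matrix.mul_apply]
    rw [h1]
    have h2 : HasDerivAt (fun θ => ∑ k, A θ i k * A θ k j)
        (∑ k, (A' i k * A θ₀ k j + A θ₀ i k * A' k j)) θ₀ :=
      HasDerivAt.fun_sum fun k _ => (hdiff i k).mul (hdiff k j)
    have h3 := (hasDerivAt_const θ₀ ((1 : Matrix (Fin m) (Fin m) ℝ) i j)).fun_sub h2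
    refine h3.congr_deriv ?_
    simp [Matrix.neg_apply, Matrix.add_apply, Matrix.mul_apply, Finset.sum_add_distrib]
  have hdet : HasDerivAt (fun θ => (1 - A θ ^ 2).det)
      ((Matrix.adjugate (1 - A θ₀ ^ 2) * (-(A' * A θ₀ + A θ₀ * A'))).trace) θ₀ :=
    hasDerivAt_det_aux (B := fun θ => 1 - A θ ^ 2) hB
  have hPD : (1 - A θ₀ ^ 2).PosDef := posdef_aux (hsymm θ₀) hnorm
  have hD : 0 < (1 - A θ₀ ^ 2).det := hPD.det_pos
  have hUdet : IsUnit (1 - A θ₀ ^ 2).det := hD.ne'.isUnit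
  -- commuting A θ₀ with the inverse
  have hcomm : (1 - A θ₀ ^ 2)⁻¹ * A θ₀ = A θ₀ * (1 - A θ₀ ^ 2)⁻¹ := by
    have hc : A θ₀ * (1 - A θ₀ ^ 2) = (1 - A θ₀ ^ 2) * A θ₀ := by noncomm_ring
    calc (1 - A θ₀ ^ 2)⁻¹ * A θ₀
        = (1 - A θ₀ ^ 2)⁻¹ * (A θ₀ * ((1 - A θ₀ ^ 2) * (1 - A θ₀ ^ 2)⁻¹)) := by
          rw [Matrix.mul_nonsing_inv _ hUdet, Matrix.mul_one]
      _ = (1 - A θ₀ ^ 2)⁻¹ * (A θ₀ * (1 - A θ₀ ^ 2) * (1 - A θ₀ ^ 2)⁻¹) := by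
          rw [Matrix.mul_assoc (A θ₀)]
      _ = (1 - A θ₀ ^ 2)⁻¹ * ((1 - A θ₀ ^ 2) * A θ₀ * (1 - A θ₀ ^ 2)⁻¹) := by rw [hc]
      _ = (1 - A θ₀ ^ 2)⁻¹ * (1 - A θ₀ ^ 2) * (A θ₀ * (1 - A θ₀ ^ 2)⁻¹) := by
          simp only [Matrix.mul_assoc]
      _ = A θ₀ * (1 - A θ₀ ^ 2)⁻¹ := by
          rw [Matrix.nonsing_inv_mul _ hUdet, Matrix.one_mul]
  -- adjugate in terms of the inverse
  have hadj : Matrix.adjugate (1 - A θ₀ ^ 2) = (1 - A θ₀ ^ 2).det • (1 - A θ₀ ^ 2)⁻¹ := by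
    rw [Matrix.inv_def, Ring.inverse_eq_inv, smul_smul, mul_inv_cancel₀ hD.ne', one_smul]
  -- the determinant derivative in trace form
  have hdd : (Matrix.adjugate (1 - A θ₀ ^ 2) * (-(A' * A θ₀ + A θ₀ * A'))).trace
      = -(2 * (A θ₀ * (1 - A θ₀ ^ 2)⁻¹ * A').trace * (1 - A θ₀ ^ 2).det) := by
    rw [hadj, Matrix.smul_mul, Matrix.trace_smul]
    have key : ((1 - A θ₀ ^ 2)⁻¹ * (-(A' * A θ₀ + A θ₀ * A'))).trace
        = -(2 * (A θ₀ * (1 - A θ₀ ^ 2)⁻¹ * A').trace) := by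
      rw [Matrix.mul_neg, Matrix.mul_add, Matrix.trace_neg, Matrix.trace_add]
      have e1 : ((1 - A θ₀ ^ 2)⁻¹ * (A' * A θ₀)).trace
          = (A θ₀ * (1 - A θ₀ ^ 2)⁻¹ * A').trace := by
        rw [← Matrix.mul_assoc, Matrix.trace_mul_cycle]
      have e2 : ((1 - A θ₀ ^ 2)⁻¹ * (A θ₀ * A')).trace
          = (A θ₀ * (1 - A θ₀ ^ 2)⁻¹ * A').trace := by
        rw [← Matrix.mul_assoc, hcomm]
      rw [e1, e2]; ring
    rw [key, smul_eq_mul]; ring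
  -- derivative of the square-root factor
  have hsq : HasDerivAt (fun θ => Real.sqrt (1 - A θ ^ 2).det)
      (-(A θ₀ * (1 - A θ₀ ^ 2)⁻¹ * A').trace * Real.sqrt (1 - A θ₀ ^ 2).det) θ₀ := by
    have h : HasDerivAt (fun θ => Real.sqrt (1 - A θ ^ 2).det)
        ((Matrix.adjugate (1 - A θ₀ ^ 2) * (-(A' * A θ₀ + A θ₀ * A'))).trace /
          (2 * Real.sqrt (1 - A θ₀ ^ 2).det)) θ₀ := hdet.sqrt hD.ne'
    convert h using 1
    rw [hdd]
    have hs2 : (2:ℝ) * Real.sqrt (1 - A θ₀ ^ 2).det ≠ 0 := by positivity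
    refine (eq_div_iff hs2).mpr ?_
    have hss : Real.sqrt (1 - A θ₀ ^ 2).det * Real.sqrt (1 - A θ₀ ^ 2).det
        = (1 - A θ₀ ^ 2).det := Real.mul_self_sqrt hD.le
    calc -(A θ₀ * (1 - A θ₀ ^ 2)⁻¹ * A').trace * Real.sqrt (1 - A θ₀ ^ 2).det *
          (2 * Real.sqrt (1 - A θ₀ ^ 2).det)
        = -(2 * (A θ₀ * (1 - A θ₀ ^ 2)⁻¹ * A').trace *
            (Real.sqrt (1 - A θ₀ ^ 2).det * Real.sqrt (1 - A θ₀ ^ 2).det)) := by ring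
      _ = _ := by rw [hss]
  -- differentiability of the hafnian factor
  have hHd : DifferentiableAt ℝ (fun θ => hafnian (repMat (A θ) n)) θ₀ := by
    simp only [hafnian, repMat, Matrix.submatrix_apply]
    refine DifferentiableAt.fun_sum fun σ _ => ?_
    exact (HasDerivAt.fun_finsetProd fun i _ => hdiff _ _).differentiableAt
  have hH : HasDerivAt (fun θ => hafnian (repMat (A θ) n))
      (deriv (fun θ => hafnian (repMat (A θ) n)) θ₀) θ₀ := hHd.hasDerivAt
  have final : HasDerivAt
      (fun θ => Real.sqrt (1 - A θ ^ 2).det * hafnian (repMat (A θ) n) ^ 2 /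
        ∏ i, (Nat.factorial (n i) : ℝ))
      ((-(A θ₀ * (1 - A θ₀ ^ 2)⁻¹ * A').trace * Real.sqrt (1 - A θ₀ ^ 2).det *
          hafnian (repMat (A θ₀) n) ^ 2 +
        Real.sqrt (1 - A θ₀ ^ 2).det *
          (((2 : ℕ) : ℝ) * hafnian (repMat (A θ₀) n) ^ 1 *
            deriv (fun θ => hafnian (repMat (A θ) n)) θ₀)) /
        ∏ i, (Nat.factorial (n i) : ℝ)) θ₀ :=
    (hsq.mul (hH.pow 2)).div_const (∏ i, (Nat.factorial (n i) : ℝ))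
  convert final using 1
  push_cast
  ring
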